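/- Let A ∈ ℤ^{d×n} with |A_{ij}| ≤ Δ, let P be a partition of {1,…,n}, and for each S ∈ P let t_S ≥ 1 be an integer; set t = ∑_{S∈P} t_S. Let x ∈ ℕ^n satisfy ∑_{i∈S} x_i = t_S for all S ∈ P, and set b = A x. Let S_1,…,S_t ∈ P and rationals d_1 ≤ ⋯ ≤ d_t be a breakpoint sequence, i.e., for each S ∈ P and each r ∈ {1,…,t_S} there is exactly one k ∈ {1,…,t} with S_k = S and d_k = r/t_S. Then there exists a sequence σ : {1,…,t} → {1,…,n} such that σ(k) ∈ S_k for every k, each index i ∈ {1,…,n} occurs exactly x_i times in σ, and for every k = 1,…,t the partial solution x'(k) ∈ ℕ^n defined by x'(k)_i = |{l ≤ k : σ(l) = i}| satisfies ‖A·x'(k) − d_k·b‖_∞ ≤ 4dΔ·|P|. -/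

import Mathlib

open Finset

private lemma round_lemma {ι : Type*} [Fintype ι] [DecidableEq ι]
    (D : ℕ) (M : Fin D → ι → ℚ) (A : Finset ι) :
    ∀ (N : ℕ) (lam : ι → ℚ), (∀ i ∈ A, 0 ≤ lam i ∧ lam i ≤ 1) →
      (A.filter fun i => lam i ≠ 0 ∧ lam i ≠ 1).card ≤ N →
      ∃ μ : ι → ℚ, (∀ i ∈ A, 0 ≤ μ i ∧ μ i ≤ 1) ∧
        (∀ r, ∑ i ∈ A, M r i * μ i = ∑ i ∈ A, M r i * lam i) ∧
        (A.filter fun i => μ i ≠ 0 ∧ μ i ≠ 1).card ≤ D := by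
  intro N
  induction N with
  | zero =>
    intro lam h01 hN
    exact ⟨lam, h01, fun r => rfl, by omega⟩
  | succ N ih =>
    intro lam h01 hN
    by_cases hD : (A.filter fun i => lam i ≠ 0 ∧ lam i ≠ 1).card ≤ D
    · exact ⟨lam, h01, fun r => rfl, hD⟩
    push_neg at hD
    set F := A.filter fun i => lam i ≠ 0 ∧ lam i ≠ 1 with hF
    have hFA : F ⊆ A := filter_subset _ _
    -- linear dependence of the columns indexed by F
    have hdep : ¬ LinearIndependent ℚ (fun i : F => (fun r => M r i : Fin D → ℚ)) := by
      intro h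
      have := h.fintype_card_le_finrank
      rw [Module.finrank_fintype_fun_eq_card, Fintype.card_coe, Fintype.card_fin] at this
      omega
    obtain ⟨g, hg0, i₁, hgi₁⟩ := Fintype.not_linearIndependent_iff.mp hdep
    set γ : ι → ℚ := fun i => if h : i ∈ F then g ⟨i, h⟩ else 0 with hγ
    have hγF : ∀ i, i ∉ F → γ i = 0 := by intro i hi; simp [hγ, hi]
    have hγsum : ∀ r, ∑ i ∈ A, M r i * γ i = 0 := by
      intro r
      have h1 : ∑ i ∈ A, M r i * γ i = ∑ i ∈ F, M r i * γ i := by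
        refine (Finset.sum_subset hFA ?_).symm
        intro i hiA hiF
        rw [hγF i hiF, mul_zero]
      have h2 : ∑ i ∈ F, M r i * γ i = ∑ i : F, M r i * g i := by
        rw [← Finset.sum_attach F (fun i => M r i * γ i)]
        refine Finset.sum_congr rfl ?_
        intro i _
        simp [hγ, i.2]
      have h3 := congrFun hg0 r
      rw [Finset.sum_apply] at h3
      simp only [Pi.smul_apply, smul_eq_mul, Pi.zero_apply] at h3
      rw [h1, h2, ← h3]
      exact Finset.sum_congr rfl (fun i _ => mul_comm _ _)
    have h01F : ∀ i ∈ F, 0 < lam i ∧ lam i < 1 := by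
      intro i hi
      rw [hF, mem_filter] at hi
      obtain ⟨hiA, h0, h1⟩ := hi
      exact ⟨(h01 i hiA).1.lt_of_ne (Ne.symm h0), (h01 i hiA).2.lt_of_ne h1⟩
    set Supp := F.filter (fun i => γ i ≠ 0) with hSupp
    have hne : Supp.Nonempty := by
      refine ⟨(i₁ : ι), ?_⟩
      rw [hSupp, mem_filter]
      refine ⟨i₁.2, ?_⟩
      simpa [hγ, i₁.2] using hgi₁
    set δ : ι → ℚ := fun i => if 0 < γ i then (1 - lam i) / γ i else lam i / (-γ i) with hδ
    have hδ0 : ∀ i ∈ Supp, 0 ≤ δ i := by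
      intro i hi
      rw [hSupp, mem_filter] at hi
      obtain ⟨hiF, hγi⟩ := hi
      obtain ⟨hl0, hl1⟩ := h01F i hiF
      rw [hδ]
      by_cases hpos : 0 < γ i
      · simp only [hpos, if_true]
        exact div_nonneg (by linarith) hpos.le
      · simp only [hpos, if_false]
        have : γ i < 0 := lt_of_le_of_ne (not_lt.mp hpos) hγi
        exact div_nonneg hl0.le (by linarith)
    set tmin := Supp.inf' hne δ with htmin
    have htmin0 : 0 ≤ tmin := Finset.le_inf' hne δ hδ0
    have htle : ∀ i ∈ Supp, tmin ≤ δ i := fun i hi => Finset.inf'_le δ hi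
    set μ : ι → ℚ := fun i => lam i + tmin * γ i with hμ
    have hSuppF : Supp ⊆ F := filter_subset _ _
    have hmemSupp : ∀ i, γ i ≠ 0 → i ∈ Supp := by
      intro i hγi
      have hiF : i ∈ F := by by_contra h; exact hγi (hγF i h)
      rw [hSupp, mem_filter]; exact ⟨hiF, hγi⟩
    have hbounds : ∀ i ∈ A, 0 ≤ μ i ∧ μ i ≤ 1 := by
      intro i hiA
      by_cases hγi : γ i = 0
      · simp [hμ, hγi]; exact h01 i hiA
      have hiS : i ∈ Supp := hmemSupp i hγi
      have hiF : i ∈ F := hSuppF hiS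
      obtain ⟨hl0, hl1⟩ := h01F i hiF
      have hti := htle i hiS
      simp only [hμ]
      by_cases hpos : 0 < γ i
      · constructor
        · have : 0 ≤ tmin * γ i := mul_nonneg htmin0 hpos.le
          linarith
        · have : tmin * γ i ≤ 1 - lam i := by
            have := (le_div_iff₀ hpos).mp (by simpa [hδ, hpos] using hti)
            linarith
          linarith
      · have hneg : γ i < 0 := lt_of_le_of_ne (not_lt.mp hpos) hγi
        constructor
        · have : tmin * (-γ i) ≤ lam i := by
            have := (le_div_iff₀ (by linarith : (0:ℚ) < -γ i)).mp
              (by simpa [hδ, hpos] using hti)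
            linarith
          linarith
        · have : tmin * γ i ≤ 0 := mul_nonpos_of_nonneg_of_nonpos htmin0 hneg.le
          linarith
    have hsums : ∀ r, ∑ i ∈ A, M r i * μ i = ∑ i ∈ A, M r i * lam i := by
      intro r
      have : ∀ i ∈ A, M r i * μ i = M r i * lam i + tmin * (M r i * γ i) := by
        intro i _; rw [hμ]; ring
      rw [Finset.sum_congr rfl this, Finset.sum_add_distrib, ← Finset.mul_sum, hγsum, mul_zero,
        add_zero]
    -- strict decrease of the fractional set
    obtain ⟨i₀, hi₀S, hminv⟩ := Finset.exists_mem_eq_inf' hne δ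
    have hi₀F : i₀ ∈ F := hSuppF hi₀S
    have hγi₀ : γ i₀ ≠ 0 := (mem_filter.mp hi₀S).2
    have htv : tmin = δ i₀ := hminv
    have hμi₀ : μ i₀ = 0 ∨ μ i₀ = 1 := by
      simp only [hμ]
      rw [htv]
      by_cases hpos : 0 < γ i₀
      · right
        simp only [hδ, hpos, if_true]
        rw [div_mul_cancel₀ _ hγi₀]; ring
      · left
        have hneg : γ i₀ < 0 := lt_of_le_of_ne (not_lt.mp hpos) hγi₀
        simp only [hδ, hpos, if_false]
        rw [div_mul_eq_mul_div, div_neg, mul_div_cancel_right₀ _ hγi₀, add_neg_cancel]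
    have hsubset : (A.filter fun i => μ i ≠ 0 ∧ μ i ≠ 1) ⊆ F.erase i₀ := by
      intro i hi
      rw [mem_filter] at hi
      obtain ⟨hiA, hμ0, hμ1⟩ := hi
      have hine : i ≠ i₀ := by
        rintro rfl
        rcases hμi₀ with h | h
        · exact hμ0 h
        · exact hμ1 h
      refine Finset.mem_erase.mpr ⟨hine, ?_⟩
      by_cases hγi : γ i = 0
      · have : μ i = lam i := by simp [hμ, hγi]
        rw [hF, mem_filter]
        exact ⟨hiA, by rwa [← this], by rwa [← this]⟩
      · exact hSuppF (hmemSupp i hγi)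
    have hcard : (A.filter fun i => μ i ≠ 0 ∧ μ i ≠ 1).card ≤ N := by
      have h1 := Finset.card_le_card hsubset
      have h2 : (F.erase i₀).card = F.card - 1 := Finset.card_erase_of_mem hi₀F
      omega
    obtain ⟨μ', h1, h2, h3⟩ := ih μ hbounds hcard
    exact ⟨μ', h1, fun r => (h2 r).trans (hsums r), h3⟩

private def SGood {ι : Type*} [Fintype ι] [DecidableEq ι] {d : ℕ}
    (v : ι → Fin d → ℚ) (A : Finset ι) : Prop :=
  ∃ lam : ι → ℚ, (∀ i ∈ A, 0 ≤ lam i ∧ lam i ≤ 1) ∧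
    (∑ i ∈ A, lam i = (A.card : ℚ) - d) ∧ (∀ r, ∑ i ∈ A, lam i * v i r = 0)

private lemma chain_step {ι : Type*} [Fintype ι] [DecidableEq ι] {d : ℕ}
    (v : ι → Fin d → ℚ) (A : Finset ι) (hdA : d < A.card) (hG : SGood v A) :
    ∃ i₀ ∈ A, SGood v (A.erase i₀) := by
  obtain ⟨lam, h01, hsum, hv⟩ := hG
  have hkd : (0:ℚ) < (A.card : ℚ) - d := by
    have : (d:ℚ) < (A.card:ℚ) := by exact_mod_cast hdA
    linarith
  have hkd' : ((A.card : ℚ) - d) ≠ 0 := ne_of_gt hkd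
  have hnum : (0:ℚ) ≤ (A.card : ℚ) - 1 - d := by
    have : (d:ℚ) + 1 ≤ (A.card:ℚ) := by exact_mod_cast hdA
    linarith
  set c1 : ℚ := ((A.card : ℚ) - 1 - d) / ((A.card : ℚ) - d) with hc1
  have hc10 : 0 ≤ c1 := div_nonneg hnum hkd.le
  have hc11 : c1 ≤ 1 := by
    rw [hc1, div_le_one hkd]; linarith
  set lam' : ι → ℚ := fun i => c1 * lam i with hlam'
  have h01' : ∀ i ∈ A, 0 ≤ lam' i ∧ lam' i ≤ 1 := by
    intro i hi
    obtain ⟨h0, h1⟩ := h01 i hi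
    exact ⟨mul_nonneg hc10 h0, mul_le_one₀ hc11 h0 h1⟩
  set M : Fin (d+1) → ι → ℚ := Fin.cons (fun _ => 1) (fun r i => v i r) with hM
  obtain ⟨μ, hμ01, hμsum, hμfrac⟩ := round_lemma (d+1) M A
    ((A.filter fun i => lam' i ≠ 0 ∧ lam' i ≠ 1).card) lam' h01' le_rfl
  have hμs : ∑ i ∈ A, μ i = (A.card : ℚ) - 1 - d := by
    have h0 := hμsum 0
    simp only [hM, Fin.cons_zero, one_mul] at h0
    rw [h0, hlam']
    simp only []
    rw [← Finset.mul_sum, hsum, hc1, div_mul_cancel₀ _ hkd']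
  have hμv : ∀ r : Fin d, ∑ i ∈ A, μ i * v i r = 0 := by
    intro r
    have h1 := hμsum r.succ
    simp only [hM, Fin.cons_succ] at h1
    have h2 : ∑ i ∈ A, v i r * lam' i = 0 := by
      simp only [hlam']
      have : ∀ i ∈ A, v i r * (c1 * lam i) = c1 * (lam i * v i r) := by
        intro i _; ring
      rw [Finset.sum_congr rfl this, ← Finset.mul_sum, hv r, mul_zero]
    rw [h2] at h1
    rw [← h1]
    exact Finset.sum_congr rfl (fun i _ => mul_comm _ _)
  -- find a zero coordinate
  have hzero : ∃ i₀ ∈ A, μ i₀ = 0 := by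
    by_contra h
    push_neg at h
    set Frac := A.filter (fun i => μ i ≠ 0 ∧ μ i ≠ 1) with hFrac
    set Ones := A.filter (fun i => μ i = 1) with hOnes
    have hFrac' : Frac = A.filter (fun i => ¬ (μ i = 1)) := by
      ext i
      simp only [hFrac, mem_filter, and_congr_right_iff]
      intro hi
      constructor
      · exact fun hh => hh.2
      · exact fun hh => ⟨h i hi, hh⟩
    have hcards : Ones.card + Frac.card = A.card := by
      rw [hOnes, hFrac']
      exact Finset.card_filter_add_card_filter_not (s := A) (p := fun i => μ i = 1)
    have hsplit : ∑ i ∈ A, μ i = (Ones.card : ℚ) + ∑ i ∈ Frac, μ i := by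
      rw [hFrac', hOnes, ← Finset.sum_filter_add_sum_filter_not A (fun i => μ i = 1) μ]
      congr 1
      rw [Finset.sum_congr rfl (fun i hi => (mem_filter.mp hi).2)]
      simp
    have hFsum : ∑ i ∈ Frac, μ i = (Frac.card : ℚ) - (d+1) := by
      have hc : (Ones.card : ℚ) = (A.card : ℚ) - Frac.card := by
        have := hcards
        push_cast [← this]
        ring
      rw [hμs, hc] at hsplit
      linarith
    have hFle : (Frac.card : ℚ) - (d+1) ≤ 0 := by
      have : (Frac.card : ℚ) ≤ (d:ℚ)+1 := by exact_mod_cast hμfrac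
      linarith
    rcases Frac.eq_empty_or_nonempty with hemp | hne
    · rw [hemp] at hFsum
      simp only [Finset.sum_empty, Finset.card_empty, Nat.cast_zero, zero_sub] at hFsum
      have hd0 : (0:ℚ) ≤ (d:ℚ) := by positivity
      linarith
    · have hpos : 0 < ∑ i ∈ Frac, μ i := by
        refine Finset.sum_pos ?_ hne
        intro i hi
        rw [hFrac, mem_filter] at hi
        exact ((hμ01 i hi.1).1).lt_of_ne (Ne.symm hi.2.1)
      rw [hFsum] at hpos
      linarith
  obtain ⟨i₀, hi₀A, hμi₀⟩ := hzero
  refine ⟨i₀, hi₀A, μ, ?_, ?_, ?_⟩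
  · exact fun i hi => hμ01 i (Finset.mem_of_mem_erase hi)
  · have hsum' : ∑ i ∈ A.erase i₀, μ i = ∑ i ∈ A, μ i - μ i₀ := by
      rw [← Finset.add_sum_erase A μ hi₀A]; ring
    rw [hsum', hμi₀, hμs, Finset.card_erase_of_mem hi₀A]
    have h1 : 1 ≤ A.card := by omega
    push_cast [Nat.cast_sub h1]
    ring
  · intro r
    have hsum' : ∑ i ∈ A.erase i₀, μ i * v i r = ∑ i ∈ A, μ i * v i r - μ i₀ * v i₀ r := by
      rw [← Finset.add_sum_erase A _ hi₀A]; ring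
    rw [hsum', hμv r, hμi₀]; ring

private lemma list_abs_sum_le {α : Type*} (f : α → ℚ) (B : ℚ) (hB : 0 ≤ B) :
    ∀ L : List α, (∀ a ∈ L, |f a| ≤ B) → |(L.map f).sum| ≤ L.length * B := by
  intro L
  induction L with
  | nil => simp
  | cons a tl ih =>
    intro h
    simp only [List.map_cons, List.sum_cons, List.length_cons]
    calc |f a + (tl.map f).sum| ≤ |f a| + |(tl.map f).sum| := abs_add_le _ _
      _ ≤ B + tl.length * B := by
          gcongr
          · exact h a List.mem_cons_self
          · exact ih (fun b hb => h b (List.mem_cons_of_mem a hb))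
      _ = ((tl.length + 1 : ℕ) : ℚ) * B := by push_cast; ring
  
private lemma sgood_bound {ι : Type*} [Fintype ι] [DecidableEq ι] {d : ℕ}
    (v : ι → Fin d → ℚ) (B : ℚ) (hB : ∀ i r, |v i r| ≤ B) (A : Finset ι)
    (hG : SGood v A) : ∀ r, |∑ i ∈ A, v i r| ≤ d * B := by
  obtain ⟨lam, h01, hsum, hv⟩ := hG
  intro r
  have key : ∑ i ∈ A, v i r = ∑ i ∈ A, (1 - lam i) * v i r := by
    have : ∑ i ∈ A, (1 - lam i) * v i r
        = ∑ i ∈ A, v i r - ∑ i ∈ A, lam i * v i r := by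
      rw [← Finset.sum_sub_distrib]
      exact Finset.sum_congr rfl (fun i _ => by ring)
    rw [this, hv r, sub_zero]
  rw [key]
  calc |∑ i ∈ A, (1 - lam i) * v i r| ≤ ∑ i ∈ A, |(1 - lam i) * v i r| :=
        Finset.abs_sum_le_sum_abs _ _
    _ ≤ ∑ i ∈ A, (1 - lam i) * B := by
        refine Finset.sum_le_sum ?_
        intro i hi
        rw [abs_mul, abs_of_nonneg (by linarith [(h01 i hi).2] : (0:ℚ) ≤ 1 - lam i)]
        exact mul_le_mul_of_nonneg_left (hB i r) (by linarith [(h01 i hi).2])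
    _ = ((A.card : ℚ) - ∑ i ∈ A, lam i) * B := by
        simp only [sub_mul, one_mul]
        rw [Finset.sum_sub_distrib, Finset.sum_const, nsmul_eq_mul, Finset.sum_mul]
    _ = d * B := by rw [hsum]; ring

private lemma chain_list {ι : Type*} [Fintype ι] [DecidableEq ι] {d : ℕ}
    (v : ι → Fin d → ℚ) (B : ℚ) (hB0 : 0 ≤ B) (hB : ∀ i r, |v i r| ≤ B) :
    ∀ (N : ℕ) (A : Finset ι), A.card ≤ N → (SGood v A ∨ A.card ≤ d) →
    ∃ L : List ι, L.Nodup ∧ L.toFinset = A ∧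
      ∀ (c : ℕ) (r : Fin d), |((L.take c).map (fun i => v i r)).sum| ≤ d * B := by
  intro N
  induction N with
  | zero =>
    intro A hA _
    have : A = ∅ := Finset.card_eq_zero.mp (by omega)
    subst this
    refine ⟨[], List.nodup_nil, by simp, ?_⟩
    intro c r
    simp only [List.take_nil, List.map_nil, List.sum_nil, abs_zero]
    positivity
  | succ N ih =>
    intro A hA hdisj
    by_cases hsmall : A.card ≤ d
    · refine ⟨A.toList, A.nodup_toList, A.toList_toFinset, ?_⟩
      intro c r
      calc |((A.toList.take c).map (fun i => v i r)).sum|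
          ≤ (A.toList.take c).length * B := by
            refine list_abs_sum_le _ B hB0 _ ?_
            intro a _; exact hB a r
        _ ≤ d * B := by
            have h1 : (A.toList.take c).length ≤ A.card := by
              rw [List.length_take]
              have := A.length_toList
              omega
            have : ((A.toList.take c).length : ℚ) ≤ (d:ℚ) := by
              exact_mod_cast le_trans h1 hsmall
            exact mul_le_mul_of_nonneg_right this hB0
    · have hG : SGood v A := by
        rcases hdisj with h | h
        · exact h
        · omega
      have hdA : d < A.card := not_le.mp hsmall
      obtain ⟨i₀, hi₀A, hG'⟩ := chain_step v A hdA hG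
      obtain ⟨L', hnd, htf, hbd⟩ := ih (A.erase i₀)
        (by rw [Finset.card_erase_of_mem hi₀A]; omega) (Or.inl hG')
      have hi₀L' : i₀ ∉ L' := by
        intro h
        have := List.mem_toFinset.mpr h
        rw [htf] at this
        exact (Finset.mem_erase.mp this).1 rfl
      have hndL : (L' ++ [i₀]).Nodup := by
        rw [List.nodup_append]
        exact ⟨hnd, List.nodup_singleton i₀, by simp; intro a ha h; exact hi₀L' (h ▸ ha)⟩
      have htfL : (L' ++ [i₀]).toFinset = A := by
        rw [List.toFinset_append]
        simp only [List.toFinset_cons, List.toFinset_nil]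
        rw [htf, Finset.union_comm, Finset.insert_union, Finset.empty_union, Finset.insert_erase hi₀A]
      refine ⟨L' ++ [i₀], hndL, htfL, ?_⟩
      intro c r
      by_cases hc : c ≤ L'.length
      · rw [List.take_append]
        have h0 : c - L'.length = 0 := by omega
        rw [h0, List.take_zero, List.append_nil]
        exact hbd c r
      · have hlen : (L' ++ [i₀]).length ≤ c := by
          simp only [List.length_append, List.length_singleton]; omega
        rw [List.take_of_length_le hlen]
        have hsum : ((L' ++ [i₀]).map (fun i => v i r)).sum = ∑ i ∈ A, v i r := by
          rw [← htfL, List.sum_toFinset _ hndL]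
        rw [hsum]
        exact sgood_bound v B hB A hG r

-- prefix sums of a rational list versus positions
private lemma take_sum_eq (L : List ℚ) :
    ∀ c : ℕ, c ≤ L.length → (L.take c).sum = ∑ j ∈ Finset.range c, L.getD j 0 := by
  intro c
  induction c with
  | zero => simp
  | succ c ih =>
    intro hc
    have hclt : c < L.length := by omega
    rw [List.sum_take_succ _ _ hclt, Finset.sum_range_succ, ih (by omega),
      List.getD_eq_getElem _ _ hclt]

private lemma count_pos_card {α : Type*} [DecidableEq α] (a dflt : α) :
    ∀ L : List α,
      ((Finset.range L.length).filter (fun j => L.getD j dflt = a)).card = L.count a := by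
  intro L
  induction L with
  | nil => simp
  | cons b tl ih =>
    rw [Finset.card_filter, List.length_cons, Finset.sum_range_succ']
    simp only [List.getD_cons_succ, List.getD_cons_zero]
    rw [← Finset.card_filter, ih, List.count_cons]
    simp only [beq_iff_eq]
  
private lemma list_sum_map_add {α : Type*} (g h : α → ℚ) :
    ∀ L : List α, (L.map (fun j => g j + h j)).sum = (L.map g).sum + (L.map h).sum := by
  intro L
  induction L with
  | nil => simp
  | cons b tl ih => simp [ih]; ring

private lemma list_sum_map_const {α : Type*} (cq : ℚ) :
    ∀ L : List α, (L.map (fun _ => cq)).sum = L.length * cq := by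
  intro L
  induction L with
  | nil => simp
  | cons b tl ih => simp [ih]; ring

private lemma list_sum_eq_finsum {α : Type*} (f : α → ℚ) (L : List α) :
    (L.map f).sum = ∑ j : Fin L.length, f (L.get j) := by
  conv_lhs => rw [← List.ofFn_get L]
  rw [List.map_ofFn, List.sum_ofFn]
  rfl

private lemma part_order {α : Type*} [DecidableEq α] {d : ℕ}
    (w : α → Fin d → ℚ) (Δq : ℚ) (hΔ0 : 0 ≤ Δq) (hw : ∀ i r, |w i r| ≤ Δq)
    (L0 : List α) (hL0 : L0 ≠ []) :
    ∃ L : List α, L.Perm L0 ∧ ∀ (c : ℕ), c ≤ L0.length → ∀ (r : Fin d),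
      |((L.take c).map (fun i => w i r)).sum
        - ((c : ℚ) / (L0.length : ℚ)) * ((L0.map (fun i => w i r)).sum)| ≤ 2 * d * Δq := by
  set m := L0.length with hm
  have hm1 : 1 ≤ m := List.length_pos_of_ne_nil hL0
  have hmQ : (0:ℚ) < (m:ℚ) := by exact_mod_cast hm1
  set T : Fin d → ℚ := fun r => (L0.map (fun i => w i r)).sum with hT
  have hTb : ∀ r, |T r| ≤ m * Δq := by
    intro r
    exact list_abs_sum_le _ Δq hΔ0 L0 (fun a _ => hw a r)
  set v : Fin m → Fin d → ℚ := fun j r => w (L0.get j) r - T r / m with hv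
  have hvb : ∀ j r, |v j r| ≤ 2 * Δq := by
    intro j r
    have h1 : |w (L0.get j) r| ≤ Δq := hw _ r
    have h2 : |T r / m| ≤ Δq := by
      rw [abs_div, abs_of_pos hmQ, div_le_iff₀ hmQ]
      calc |T r| ≤ m * Δq := hTb r
        _ = Δq * m := by ring
    calc |v j r| ≤ |w (L0.get j) r| + |T r / m| := by
          rw [hv]; exact abs_sub _ _
      _ ≤ 2 * Δq := by linarith
  have hvsum : ∀ r, ∑ j : Fin m, v j r = 0 := by
    intro r
    simp only [hv]
    rw [Finset.sum_sub_distrib, Finset.sum_const, ← list_sum_eq_finsum (fun i => w i r) L0]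
    simp only [Finset.card_univ, Fintype.card_fin]
    rw [nsmul_eq_mul]
    field_simp
    simp [hT]
  have hdisj : SGood v (Finset.univ : Finset (Fin m)) ∨ (Finset.univ : Finset (Fin m)).card ≤ d := by
    by_cases hmd : m ≤ d
    · right; simpa using hmd
    · left
      refine ⟨fun _ => ((m:ℚ) - d)/m, ?_, ?_, ?_⟩
      · intro i _
        constructor
        · apply div_nonneg _ hmQ.le
          have : (d:ℚ) < m := by exact_mod_cast not_le.mp hmd
          linarith
        · rw [div_le_one hmQ]
          have : (0:ℚ) ≤ d := by positivity
          linarith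
      · rw [Finset.sum_const]
        simp only [Finset.card_univ, Fintype.card_fin]
        rw [nsmul_eq_mul]
        field_simp
      · intro r
        rw [← Finset.mul_sum, hvsum r, mul_zero]
  obtain ⟨Lidx, hnd, htf, hbd⟩ := chain_list v (2*Δq) (by linarith) hvb m Finset.univ
    (by simp) hdisj
  have hlen : Lidx.length = m := by
    have := List.toFinset_card_of_nodup hnd
    rw [htf] at this
    simpa using this.symm
  have hperm : Lidx.Perm (List.finRange m) := by
    refine List.perm_of_nodup_nodup_toFinset_eq hnd (List.nodup_finRange m) ?_
    rw [htf, List.toFinset_finRange]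
  refine ⟨Lidx.map (fun j => L0.get j), ?_, ?_⟩
  · have h1 : (Lidx.map (fun j => L0.get j)).Perm ((List.finRange m).map (fun j => L0.get j)) :=
      hperm.map _
    have h2 : (List.finRange m).map (fun j => L0.get j) = L0 := by
      rw [← List.ofFn_eq_map, List.ofFn_get]
    rwa [h2] at h1
  · intro c hc r
    have hkey : ((Lidx.map (fun j => L0.get j)).take c).map (fun i => w i r)
        = (Lidx.take c).map (fun j => v j r + T r / m) := by
      rw [← List.map_take, List.map_map]
      refine List.map_congr_left ?_
      intro j _
      simp only [Function.comp_apply, hv]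
      ring
    rw [hkey, list_sum_map_add, list_sum_map_const]
    have hclen : (Lidx.take c).length = c := by
      rw [List.length_take, hlen]
      omega
    rw [hclen]
    have : (c:ℚ) * (T r / m) - (c / m) * T r = 0 := by ring
    have heq : ((Lidx.take c).map (fun j => v j r)).sum + (c:ℚ) * (T r / m)
        - ((c:ℚ) / m) * T r = ((Lidx.take c).map (fun j => v j r)).sum := by ring
    rw [heq]
    have := hbd c r
    calc |((Lidx.take c).map (fun j => v j r)).sum| ≤ (d:ℚ) * (2 * Δq) := hbd c r
      _ = 2 * d * Δq := by ring

private noncomputable def baseList {α : Type*} [DecidableEq α] (S : Finset α) (x : α → ℕ) : List α :=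
  S.toList.flatMap fun i => List.replicate (x i) i

private lemma flat_map_sum {α β : Type*} (f : β → ℚ) (g : α → List β) :
    ∀ l : List α, ((l.flatMap g).map f).sum = (l.map (fun a => ((g a).map f).sum)).sum := by
  intro l
  induction l with
  | nil => simp
  | cons a tl ih => simp [List.flatMap_cons, ih]

private lemma baseList_length {α : Type*} [DecidableEq α] (S : Finset α) (x : α → ℕ) :
    (baseList S x).length = ∑ i ∈ S, x i := by
  rw [baseList, List.length_flatMap]
  have : (S.toList.map (fun a => (List.replicate (x a) a).length)) = S.toList.map x := by
    refine List.map_congr_left ?_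
    intro a _
    simp
  rw [this, ← List.sum_toFinset _ S.nodup_toList, Finset.toList_toFinset]

private lemma baseList_mem {α : Type*} [DecidableEq α] {S : Finset α} {x : α → ℕ} {a : α}
    (h : a ∈ baseList S x) : a ∈ S := by
  rw [baseList, List.mem_flatMap] at h
  obtain ⟨b, hb, ha⟩ := h
  rw [List.eq_of_mem_replicate ha]
  exact (Finset.mem_toList).mp hb

private lemma baseList_count {α : Type*} [DecidableEq α] (S : Finset α) (x : α → ℕ) (a : α) :
    (baseList S x).count a = if a ∈ S then x a else 0 := by
  rw [baseList, List.count_flatMap]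
  have : (S.toList.map (List.count a ∘ fun i => List.replicate (x i) i))
      = S.toList.map (fun i => if a = i then x i else 0) := by
    refine List.map_congr_left ?_
    intro b _
    simp only [Function.comp_apply, List.count_replicate, beq_iff_eq]
    rcases eq_or_ne a b with h | h
    · subst h; simp
    · simp [h, h.symm]
  rw [this, ← List.sum_toFinset _ S.nodup_toList, Finset.toList_toFinset]
  rw [Finset.sum_ite_eq S a x]
  
private lemma baseList_sum {α : Type*} [DecidableEq α] (S : Finset α) (x : α → ℕ) (f : α → ℚ) :
    ((baseList S x).map f).sum = ∑ i ∈ S, (x i : ℚ) * f i := by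
  rw [baseList, flat_map_sum]
  have : (S.toList.map (fun a => (((List.replicate (x a) a).map f)).sum))
      = S.toList.map (fun a => (x a : ℚ) * f a) := by
    refine List.map_congr_left ?_
    intro b _
    simp [List.map_replicate, List.sum_replicate, nsmul_eq_mul]
  rw [this, ← List.sum_toFinset _ S.nodup_toList, Finset.toList_toFinset]

private lemma dc_eq_Icc {N : ℕ} {F : Finset ℕ} (hsub : F ⊆ Finset.Icc 1 N)
    (hdc : ∀ r ∈ F, ∀ r', 1 ≤ r' → r' ≤ r → r' ∈ F) : F = Finset.Icc 1 F.card := by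
  ext r
  constructor
  · intro hr
    have h1 : 1 ≤ r := (Finset.mem_Icc.mp (hsub hr)).1
    have h2 : Finset.Icc 1 r ⊆ F := by
      intro s hs
      rw [Finset.mem_Icc] at hs
      exact hdc r hr s hs.1 hs.2
    have := Finset.card_le_card h2
    rw [Nat.card_Icc] at this
    rw [Finset.mem_Icc]
    omega
  · intro hr
    rw [Finset.mem_Icc] at hr
    obtain ⟨h1, h2⟩ := hr
    by_contra hrF
    have hFsub : F ⊆ Finset.Icc 1 (r-1) := by
      intro s hs
      rw [Finset.mem_Icc]
      have hs1 := (Finset.mem_Icc.mp (hsub hs)).1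
      refine ⟨hs1, ?_⟩
      by_contra hsr
      push_neg at hsr
      exact hrF (hdc s hs r h1 (by omega))
    have := Finset.card_le_card hFsub
    rw [Nat.card_Icc] at this
    omega

set_option maxHeartbeats 1000000 in
/-- Existence of an increment sequence for Multi-Choice Integer Programming
following a balanced breakpoint sequence, whose partial right-hand sides stay
within `4dΔ|P|` (in infinity norm) of `d_k · b`. -/
theorem multichoice_path_exists
    (d n Δ : ℕ) (hd : 1 ≤ d) (hΔ : 1 ≤ Δ)
    (A : Fin d → Fin n → ℤ)
    (hA : ∀ (r : Fin d) (i : Fin n), |A r i| ≤ (Δ : ℤ))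
    (P : Finset (Finset (Fin n)))
    (hP : ∀ i : Fin n, ∃! S : Finset (Fin n), S ∈ P ∧ i ∈ S)
    (tS : Finset (Fin n) → ℕ) (htS : ∀ S ∈ P, 1 ≤ tS S)
    (t : ℕ) (ht : t = ∑ S ∈ P, tS S)
    (x : Fin n → ℕ)
    (hx : ∀ S ∈ P, ∑ i ∈ S, x i = tS S)
    (b : Fin d → ℤ)
    (hb : ∀ r : Fin d, b r = ∑ i, A r i * x i)
    -- the breakpoint sequence
    (Sseq : Fin t → Finset (Fin n)) (hSseq : ∀ k : Fin t, Sseq k ∈ P)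
    (dseq : Fin t → ℚ) (hmono : Monotone dseq)
    (hbp : ∀ S ∈ P, ∀ r ∈ Finset.Icc 1 (tS S),
      ∃! k : Fin t, Sseq k = S ∧ dseq k = (r : ℚ) / (tS S : ℚ)) :
    ∃ σ : Fin t → Fin n,
      (∀ k : Fin t, σ k ∈ Sseq k) ∧
      (∀ i : Fin n, (Finset.univ.filter (fun k : Fin t => σ k = i)).card = x i) ∧
      (∀ k : Fin t, ∀ r : Fin d,
        |((∑ l ∈ Finset.Iic k, A r (σ l) : ℤ) : ℚ) - dseq k * (b r : ℚ)|
          ≤ 4 * d * Δ * P.card) := by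
  classical
  rcases Nat.eq_zero_or_pos t with ht0 | htpos
  · -- degenerate case t = 0
    refine ⟨fun k => absurd k.2 (by omega), ?_, ?_, ?_⟩
    · intro k; exact absurd k.2 (by omega)
    · intro i
      exfalso
      obtain ⟨S, hS⟩ := hP i
      have h1 : 1 ≤ tS S := htS S hS.1.1
      have h2 : tS S ≤ t := ht ▸ Finset.single_le_sum (fun S _ => Nat.zero_le _) hS.1.1
      omega
    · intro k; exact absurd k.2 (by omega)
  -- main case
  have htSQ : ∀ S ∈ P, (0:ℚ) < (tS S : ℚ) := by
    intro S hS
    exact_mod_cast htS S hS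
  -- inverse breakpoint map Φ
  have hΦex : ∀ (S : Finset (Fin n)) (r : ℕ), ∃ k : Fin t,
      S ∈ P → r ∈ Finset.Icc 1 (tS S) → (Sseq k = S ∧ dseq k = (r : ℚ) / (tS S : ℚ)) := by
    intro S r
    by_cases hS : S ∈ P ∧ r ∈ Finset.Icc 1 (tS S)
    · obtain ⟨k, hk, _⟩ := hbp S hS.1 r hS.2
      exact ⟨k, fun _ _ => hk⟩
    · exact ⟨⟨0, htpos⟩, fun h1 h2 => absurd ⟨h1, h2⟩ hS⟩
  choose Φ hΦ using hΦex
  have hΦuniq : ∀ S ∈ P, ∀ r ∈ Finset.Icc 1 (tS S), ∀ k : Fin t,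
      Sseq k = S → dseq k = (r:ℚ)/(tS S : ℚ) → k = Φ S r := by
    intro S hS r hr k h1 h2
    obtain ⟨k', hk', huniq⟩ := hbp S hS r hr
    rw [huniq k ⟨h1, h2⟩, huniq (Φ S r) (hΦ S r hS hr)]
  -- surjectivity of Φ via counting
  have hsurj : ∀ k : Fin t, ∃ r : ℕ, r ∈ Finset.Icc 1 (tS (Sseq k)) ∧ Φ (Sseq k) r = k := by
    have hcard : (P.sigma (fun S => Finset.Icc 1 (tS S))).card = t := by
      rw [Finset.card_sigma]
      simp only [Nat.card_Icc]
      rw [ht]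
      exact Finset.sum_congr rfl (fun S _ => by omega)
    have himg : (P.sigma (fun S => Finset.Icc 1 (tS S))).image
        (fun p => Φ p.1 p.2) = Finset.univ := by
      apply Finset.eq_univ_of_card
      rw [Finset.card_image_of_injOn, hcard, Fintype.card_fin]
      intro p hp q hq hpq
      simp only [] at hpq
      rw [Finset.mem_coe, Finset.mem_sigma] at hp hq
      obtain ⟨hp1, hp2⟩ := hΦ p.1 p.2 hp.1 hp.2
      obtain ⟨hq1, hq2⟩ := hΦ q.1 q.2 hq.1 hq.2
      have hS : p.1 = q.1 := by rw [← hp1, ← hq1, hpq]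
      have hr : p.2 = q.2 := by
        rw [hpq] at hp2
        rw [hp2, hS] at hq2
        have hpos := htSQ q.1 hq.1
        field_simp at hq2
        exact_mod_cast hq2
      obtain ⟨pS, pr⟩ := p
      obtain ⟨qS, qr⟩ := q
      simp only at hS hr
      subst hS; subst hr; rfl
    intro k
    have hk : k ∈ (P.sigma (fun S => Finset.Icc 1 (tS S))).image (fun p => Φ p.1 p.2) := by
      rw [himg]; exact Finset.mem_univ k
    rw [Finset.mem_image] at hk
    obtain ⟨p, hp, hpk⟩ := hk
    rw [Finset.mem_sigma] at hp
    have hS : Sseq k = p.1 := by rw [← hpk]; exact (hΦ p.1 p.2 hp.1 hp.2).1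
    refine ⟨p.2, ?_, ?_⟩
    · rw [hS]; exact hp.2
    · rw [hS]; exact hpk
  choose ρ hρIcc hρΦ using hsurj
  have hρd : ∀ k : Fin t, dseq k = (ρ k : ℚ) / (tS (Sseq k) : ℚ) := by
    intro k
    have h := hΦ (Sseq k) (ρ k) (hSseq k) (hρIcc k)
    rw [hρΦ k] at h
    exact h.2
  have hρΦr : ∀ S ∈ P, ∀ r ∈ Finset.Icc 1 (tS S), ρ (Φ S r) = r := by
    intro S hS r hr
    have h1 := hΦ S r hS hr
    have h2 := hρd (Φ S r)
    rw [h1.1] at h2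
    rw [h1.2] at h2
    have hpos := htSQ S hS
    field_simp at h2
    exact_mod_cast h2.symm
  -- the ordered lists per part
  have hbase_len : ∀ S ∈ P, (baseList S x).length = tS S := by
    intro S hS; rw [baseList_length, hx S hS]
  have hbase_ne : ∀ S ∈ P, baseList S x ≠ [] := by
    intro S hS h
    have := hbase_len S hS
    rw [h] at this
    simp at this
    have := htS S hS
    omega
  set colq : Fin n → Fin d → ℚ := fun i r => (A r i : ℚ) with hcolq
  have hcolb : ∀ i r, |colq i r| ≤ (Δ:ℚ) := by
    intro i r
    rw [hcolq]
    simp only []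
    rw [← Int.cast_abs]
    exact_mod_cast hA r i
  have hordex : ∀ S : Finset (Fin n), ∃ L : List (Fin n), S ∈ P →
      (L.Perm (baseList S x) ∧ ∀ c ≤ tS S, ∀ r : Fin d,
        |((L.take c).map (fun i => colq i r)).sum
          - ((c:ℚ)/(tS S:ℚ)) * (((baseList S x).map (fun i => colq i r)).sum)|
          ≤ 2*d*Δ) := by
    intro S
    by_cases hS : S ∈ P
    · obtain ⟨L, hperm, hbnd⟩ := part_order colq (Δ:ℚ) (by positivity) hcolb
        (baseList S x) (hbase_ne S hS)
      refine ⟨L, fun _ => ⟨hperm, ?_⟩⟩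
      intro c hc r
      have := hbnd c (by rw [hbase_len S hS]; exact hc) r
      rwa [hbase_len S hS] at this
    · exact ⟨[], fun h => absurd h hS⟩
  choose ord hord using hordex
  have hordlen : ∀ S ∈ P, (ord S).length = tS S := by
    intro S hS
    rw [(hord S hS).1.length_eq, hbase_len S hS]
  have hordmem : ∀ S ∈ P, ∀ a ∈ ord S, a ∈ S := by
    intro S hS a ha
    exact baseList_mem (((hord S hS).1.mem_iff).mp ha)
  have hordcount : ∀ S ∈ P, ∀ a, (ord S).count a = if a ∈ S then x a else 0 := by
    intro S hS a
    rw [(hord S hS).1.count_eq, baseList_count]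
  have pf : ∀ k : Fin t, ρ k - 1 < (ord (Sseq k)).length := by
    intro k
    rw [hordlen _ (hSseq k)]
    have h := hρIcc k
    rw [Finset.mem_Icc] at h
    omega
  set σ : Fin t → Fin n := fun k => (ord (Sseq k)).get ⟨ρ k - 1, pf k⟩ with hσ
  have hσmem : ∀ k, σ k ∈ Sseq k := by
    intro k
    exact hordmem _ (hSseq k) _ (List.get_mem _ _)
  have hσget : ∀ (k : Fin t) (dflt : Fin n), σ k = (ord (Sseq k)).getD (ρ k - 1) dflt := by
    intro k dflt
    rw [hσ]
    simp only []
    rw [List.getD_eq_getElem _ dflt (pf k)]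
    rfl
  refine ⟨σ, hσmem, ?_, ?_⟩
  · -- the count property
    intro i
    obtain ⟨Si, ⟨hSiP, hiSi⟩, hSiuniq⟩ := hP i
    have hSseq_eq : ∀ k : Fin t, σ k = i → Sseq k = Si := by
      intro k hk
      refine hSiuniq (Sseq k) ⟨hSseq k, ?_⟩
      rw [← hk]; exact hσmem k
    have hcard_eq : (Finset.univ.filter (fun k : Fin t => σ k = i)).card
        = ((Finset.range (tS Si)).filter (fun j => (ord Si).getD j i = i)).card := by
      refine Finset.card_nbij' (fun k => ρ k - 1) (fun j => Φ Si (j+1)) ?_ ?_ ?_ ?_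
      · intro k hk
        simp only []
        rw [Finset.mem_coe, Finset.mem_filter] at hk
        have hSk := hSseq_eq k hk.2
        have hIcc := hρIcc k
        rw [hSk, Finset.mem_Icc] at hIcc
        rw [Finset.mem_coe, Finset.mem_filter, Finset.mem_range]
        refine ⟨by omega, ?_⟩
        rw [← hSk, ← hσget k i]
        exact hk.2
      · intro j hj
        simp only []
        rw [Finset.mem_coe, Finset.mem_filter, Finset.mem_range] at hj
        have hrIcc : j + 1 ∈ Finset.Icc 1 (tS Si) := by
          rw [Finset.mem_Icc]; omega
        have h1 := hΦ Si (j+1) hSiP hrIcc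
        have h2 := hρΦr Si hSiP (j+1) hrIcc
        rw [Finset.mem_coe, Finset.mem_filter]
        refine ⟨Finset.mem_univ _, ?_⟩
        rw [hσget (Φ Si (j+1)) i, h1.1, h2]
        simpa using hj.2
      · intro k hk
        simp only []
        rw [Finset.mem_coe, Finset.mem_filter] at hk
        have hSk := hSseq_eq k hk.2
        have hIcc := hρIcc k
        rw [Finset.mem_Icc] at hIcc
        have h3 : ρ k - 1 + 1 = ρ k := by omega
        rw [h3, ← hSk]
        exact hρΦ k
      · intro j hj
        simp only []
        rw [Finset.mem_coe, Finset.mem_filter, Finset.mem_range] at hj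
        have hrIcc : j + 1 ∈ Finset.Icc 1 (tS Si) := by
          rw [Finset.mem_Icc]; omega
        rw [hρΦr Si hSiP (j+1) hrIcc]
        omega
    rw [hcard_eq, ← hordlen Si hSiP, count_pos_card, hordcount Si hSiP, if_pos hiSi]
  · -- the norm bound
    intro k r
    set q : ℚ := dseq k with hq
    have hq0 : 0 < q := by
      rw [hq, hρd k]
      have hIcc := hρIcc k
      rw [Finset.mem_Icc] at hIcc
      have h1 : (0:ℚ) < (ρ k : ℚ) := by exact_mod_cast hIcc.1
      exact div_pos h1 (htSQ _ (hSseq k))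
    have hq1 : q ≤ 1 := by
      rw [hq, hρd k]
      have hIcc := hρIcc k
      rw [Finset.mem_Icc] at hIcc
      rw [div_le_one (htSQ _ (hSseq k))]
      exact_mod_cast hIcc.2
    -- part function
    have hptf : ∀ S ∈ P, Finset.univ.filter (fun i : Fin n => (hP i).choose = S) = S := by
      intro S hS
      ext i
      rw [Finset.mem_filter]
      constructor
      · rintro ⟨-, hpt⟩
        rw [← hpt]
        exact (hP i).choose_spec.1.2
      · intro hiS
        exact ⟨Finset.mem_univ i, ((hP i).choose_spec.2 S ⟨hS, hiS⟩).symm⟩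
    have hbq : (b r : ℚ) = ∑ S ∈ P, ((baseList S x).map (fun i => colq i r)).sum := by
      rw [hb r]
      push_cast
      rw [← Finset.sum_fiberwise_of_maps_to (g := fun i : Fin n => (hP i).choose)
        (t := P) (fun i _ => (hP i).choose_spec.1.1) (fun i => (A r i : ℚ) * (x i : ℚ))]
      refine Finset.sum_congr rfl ?_
      intro S hS
      rw [baseList_sum, hptf S hS]
      exact Finset.sum_congr rfl (fun i _ => by rw [hcolq]; ring)
    have hLHS : ((∑ l ∈ Finset.Iic k, A r (σ l) : ℤ) : ℚ)
        = ∑ S ∈ P, ∑ l ∈ (Finset.Iic k).filter (fun l => Sseq l = S), colq (σ l) r := by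
      push_cast
      rw [Finset.sum_fiberwise_of_maps_to (g := fun l : Fin t => Sseq l)
        (t := P) (fun l _ => hSseq l) (fun l => colq (σ l) r)]
    -- per-part bound
    have hperS : ∀ S ∈ P,
        |(∑ l ∈ (Finset.Iic k).filter (fun l => Sseq l = S), colq (σ l) r)
          - q * ((baseList S x).map (fun i => colq i r)).sum| ≤ (2*d+1) * Δ := by
      intro S hS
      set m : ℕ := tS S with hm
      have hmQ : (0:ℚ) < (m:ℚ) := htSQ S hS
      set Fk : Finset ℕ := (Finset.Icc 1 m).filter (fun r' => Φ S r' ≤ k) with hFk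
      set c : ℕ := Fk.card with hc
      have hcm : c ≤ m := by
        rw [hc]
        calc Fk.card ≤ (Finset.Icc 1 m).card := Finset.card_le_card (Finset.filter_subset _ _)
          _ = m := by rw [Nat.card_Icc]; omega
      have hFkIcc : Fk = Finset.Icc 1 c := by
        refine dc_eq_Icc (Finset.filter_subset _ _) ?_
        intro r1 hr1 r2 hr21 hr2
        rw [hFk, Finset.mem_filter, Finset.mem_Icc] at hr1 ⊢
        have hr2Icc : r2 ∈ Finset.Icc 1 m := Finset.mem_Icc.mpr ⟨hr21, le_trans hr2 hr1.1.2⟩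
        refine ⟨⟨hr21, le_trans hr2 hr1.1.2⟩, ?_⟩
        by_contra hnle
        push_neg at hnle
        have hle : Φ S r1 ≤ Φ S r2 := le_trans hr1.2 (le_of_lt hnle)
        have hmono2 := hmono hle
        have e1 := (hΦ S r1 hS (Finset.mem_Icc.mpr hr1.1)).2
        have e2 := (hΦ S r2 hS hr2Icc).2
        rw [e1, e2, div_le_div_iff₀ hmQ hmQ] at hmono2
        have hr12 : (r1:ℚ) ≤ r2 := le_of_mul_le_mul_right hmono2 hmQ
        have hr12' : r1 ≤ r2 := by exact_mod_cast hr12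
        have heq : r1 = r2 := le_antisymm hr12' hr2
        rw [← heq] at hnle
        exact absurd hr1.2 (not_le.mpr hnle)
      -- rewrite the fibre sum as a prefix sum of the ordered list
      have hsum1 : ∑ l ∈ (Finset.Iic k).filter (fun l => Sseq l = S), colq (σ l) r
          = ∑ r' ∈ Fk, colq ((ord S).getD (r'-1) (σ k)) r := by
        refine Finset.sum_nbij' (fun l => ρ l) (fun r' => Φ S r') ?_ ?_ ?_ ?_ ?_
        · intro l hl
          rw [Finset.mem_filter, Finset.mem_Iic] at hl
          rw [hFk, Finset.mem_filter]
          have hIcc := hρIcc l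
          rw [hl.2] at hIcc
          refine ⟨hIcc, ?_⟩
          have : Φ S (ρ l) = l := by rw [← hl.2]; exact hρΦ l
          rw [this]
          exact hl.1
        · intro r' hr'
          rw [hFk, Finset.mem_filter] at hr'
          rw [Finset.mem_filter, Finset.mem_Iic]
          exact ⟨hr'.2, (hΦ S r' hS hr'.1).1⟩
        · intro l hl
          rw [Finset.mem_filter, Finset.mem_Iic] at hl
          rw [← hl.2]
          exact hρΦ l
        · intro r' hr'
          rw [hFk, Finset.mem_filter] at hr'
          exact hρΦr S hS r' hr'.1
        · intro l hl
          rw [Finset.mem_filter, Finset.mem_Iic] at hl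
          rw [hσget l (σ k), hl.2]
      have hsum2 : ∑ r' ∈ Fk, colq ((ord S).getD (r'-1) (σ k)) r
          = ∑ j ∈ Finset.range c, colq ((ord S).getD j (σ k)) r := by
        rw [hFkIcc]
        refine Finset.sum_nbij' (fun r' => r' - 1) (fun j => j + 1) ?_ ?_ ?_ ?_ ?_
        · intro r' hr'
          rw [Finset.mem_Icc] at hr'
          rw [Finset.mem_range]
          omega
        · intro j hj
          rw [Finset.mem_range] at hj
          rw [Finset.mem_Icc]
          omega
        · intro r' hr'
          rw [Finset.mem_Icc] at hr'
          omega
        · intro j hj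
          omega
        · intro r' _
          rfl
      have hclen : c ≤ ((ord S).map (fun i => colq i r)).length := by
        rw [List.length_map, hordlen S hS]
        exact hcm
      have hsum3 : ∑ j ∈ Finset.range c, colq ((ord S).getD j (σ k)) r
          = (((ord S).take c).map (fun i => colq i r)).sum := by
        rw [List.map_take, take_sum_eq _ c hclen]
        refine Finset.sum_congr rfl ?_
        intro j hj
        rw [Finset.mem_range] at hj
        have hjlen : j < (ord S).length := by rw [hordlen S hS]; omega
        have hjlen2 : j < ((ord S).map (fun i => colq i r)).length := by
          rw [List.length_map]; exact hjlen
        rw [List.getD_eq_getElem _ (σ k) hjlen, List.getD_eq_getElem _ 0 hjlen2,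
          List.getElem_map]
      rw [hsum1, hsum2, hsum3]
      set TQ : ℚ := ((baseList S x).map (fun i => colq i r)).sum with hTQ
      set PS : ℚ := (((ord S).take c).map (fun i => colq i r)).sum with hPS
      have hbnd : |PS - ((c:ℚ)/m) * TQ| ≤ 2*d*Δ := (hord S hS).2 c hcm r
      have hTb : |TQ| ≤ m * Δ := by
        rw [hTQ]
        have := list_abs_sum_le (fun i => colq i r) (Δ:ℚ) (by positivity) (baseList S x)
          (fun a _ => hcolb a r)
        rwa [hbase_len S hS] at this
      have hupper : (c:ℚ) ≤ q * m := by
        rcases Nat.eq_zero_or_pos c with hc0 | hcpos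
        · rw [hc0]; push_cast; positivity
        · have hcF : c ∈ Fk := by rw [hFkIcc, Finset.mem_Icc]; omega
          rw [hFk, Finset.mem_filter] at hcF
          have hkq := hmono hcF.2
          rw [(hΦ S c hS hcF.1).2] at hkq
          rw [div_le_iff₀ hmQ] at hkq
          exact hkq
      have hlower : q * m - 1 ≤ (c:ℚ) := by
        by_contra hcon
        push_neg at hcon
        have hr0m : ((c+1 : ℕ):ℚ) < (m:ℚ) := by push_cast; nlinarith [hq1, hmQ]
        have hr0m' : c + 1 < m := by exact_mod_cast hr0m
        have hr0Icc : c + 1 ∈ Finset.Icc 1 m := by rw [Finset.mem_Icc]; omega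
        have hdval := (hΦ S (c+1) hS hr0Icc).2
        have hlt : dseq (Φ S (c+1)) < q := by
          rw [hdval, div_lt_iff₀ hmQ]
          push_cast
          nlinarith
        have hΦle : Φ S (c+1) ≤ k := by
          by_contra hgt
          push_neg at hgt
          have := hmono (le_of_lt hgt)
          rw [← hq] at this
          linarith
        have hin : c + 1 ∈ Fk := by rw [hFk, Finset.mem_filter]; exact ⟨hr0Icc, hΦle⟩
        rw [hFkIcc, Finset.mem_Icc] at hin
        omega
      have hdivc : (c:ℚ)/m * m = c := div_mul_cancel₀ _ (ne_of_gt hmQ)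
      have h1m : (1:ℚ)/m * m = 1 := by field_simp
      have habs : |(c:ℚ)/m - q| ≤ 1/m := by
        rw [abs_le]
        constructor
        · nlinarith [hlower, hmQ, hdivc, h1m]
        · nlinarith [hupper, hmQ, hdivc, h1m]
      have hmul : |(c:ℚ)/m - q| * |TQ| ≤ Δ := by
        have h1 : |(c:ℚ)/m - q| * |TQ| ≤ (1/m) * (m * Δ) := by
          refine mul_le_mul habs hTb (abs_nonneg _) ?_
          positivity
        have h2 : (1/(m:ℚ)) * ((m:ℚ) * Δ) = Δ := by field_simp
        linarith
      calc |PS - q * TQ| = |(PS - ((c:ℚ)/m) * TQ) + (((c:ℚ)/m - q) * TQ)| := by ring_nf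
        _ ≤ |PS - ((c:ℚ)/m) * TQ| + |((c:ℚ)/m - q) * TQ| := abs_add_le _ _
        _ ≤ 2*d*Δ + |(c:ℚ)/m - q| * |TQ| := by rw [abs_mul]; linarith
        _ ≤ 2*d*Δ + Δ := by linarith
        _ = (2*d+1) * Δ := by ring
    -- assemble
    rw [hLHS, hbq, Finset.mul_sum, ← Finset.sum_sub_distrib]
    calc |∑ S ∈ P, ((∑ l ∈ (Finset.Iic k).filter (fun l => Sseq l = S), colq (σ l) r)
            - q * ((baseList S x).map (fun i => colq i r)).sum)|
        ≤ ∑ S ∈ P, |(∑ l ∈ (Finset.Iic k).filter (fun l => Sseq l = S), colq (σ l) r)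
            - q * ((baseList S x).map (fun i => colq i r)).sum| :=
          Finset.abs_sum_le_sum_abs _ _
      _ ≤ ∑ _S ∈ P, ((2*(d:ℚ)+1) * Δ) := Finset.sum_le_sum hperS
      _ = P.card * ((2*(d:ℚ)+1) * Δ) := by rw [Finset.sum_const, nsmul_eq_mul]
      _ ≤ 4 * d * Δ * P.card := by
          have h1 : ((2*(d:ℚ)+1)) ≤ 4*d := by
            have : (1:ℚ) ≤ d := by exact_mod_cast hd
            linarith
          have hΔ0 : (0:ℚ) ≤ Δ := by positivity
          have hP0 : (0:ℚ) ≤ (P.card:ℚ) := by positivity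
          calc (P.card:ℚ) * ((2*(d:ℚ)+1) * Δ) ≤ (P.card:ℚ) * ((4*(d:ℚ)) * Δ) := by
                refine mul_le_mul_of_nonneg_left ?_ hP0
                exact mul_le_mul_of_nonneg_right h1 hΔ0
            _ = 4 * d * Δ * P.card := by ring
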